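/- In the family M(α_4, β_4) (products [e_i,e_1]=e_{i+1} for 1 ≤ i ≤ n-2, [e_n,e_1]=e_2+e_{n+1}, [e_1,e_n]=e_{n+2}, [e_n,e_n]=α_4 e_{n+1}+β_4 e_{n+2} on an (n+2)-dimensional space), the expressions α_4 - β_4 and β_4 - 1 are nullity invariants under the parameter transformations α_4' = B_n^2 α_4 / D, β_4' = B_n(A_1 β_4 + A_n α_4)/D, where D = A_1^2 + A_1 A_n β_4 + A_1 A_n α_4 + A_n^2 α_4, B_n = A_1 + A_n, and A_1 (A_1+A_n) D ≠ 0. -/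

import Mathlib

/-- In the family `M(α_4,β_4)`, the expressions `α_4 - β_4` and `β_4 - 1`
are nullity invariants under the parameter transformation
`α_4' = B_n² α_4 / D`, `β_4' = B_n (A_1 β_4 + A_n α_4) / D`, where
`D = A_1² + A_1 A_n β_4 + A_1 A_n α_4 + A_n² α_4`, `B_n = A_1 + A_n`,
and `A_1 (A_1 + A_n) D ≠ 0`. -/
theorem M_nullity_invariants (A1 An α4 β4 : ℂ)
    (h : A1 * (A1 + An) *
        (A1 ^ 2 + A1 * An * β4 + A1 * An * α4 + An ^ 2 * α4) ≠ 0) :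
    ((A1 + An) ^ 2 * α4 /
          (A1 ^ 2 + A1 * An * β4 + A1 * An * α4 + An ^ 2 * α4) -
        (A1 + An) * (A1 * β4 + An * α4) /
          (A1 ^ 2 + A1 * An * β4 + A1 * An * α4 + An ^ 2 * α4) =
      A1 * (A1 + An) * (α4 - β4) /
          (A1 ^ 2 + A1 * An * β4 + A1 * An * α4 + An ^ 2 * α4)) ∧
    ((A1 + An) * (A1 * β4 + An * α4) /
          (A1 ^ 2 + A1 * An * β4 + A1 * An * α4 + An ^ 2 * α4) - 1 =
      A1 ^ 2 * (β4 - 1) /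
          (A1 ^ 2 + A1 * An * β4 + A1 * An * α4 + An ^ 2 * α4)) ∧
    ((A1 + An) ^ 2 * α4 /
          (A1 ^ 2 + A1 * An * β4 + A1 * An * α4 + An ^ 2 * α4) =
        (A1 + An) * (A1 * β4 + An * α4) /
          (A1 ^ 2 + A1 * An * β4 + A1 * An * α4 + An ^ 2 * α4) ↔
      α4 = β4) ∧
    ((A1 + An) * (A1 * β4 + An * α4) /
          (A1 ^ 2 + A1 * An * β4 + A1 * An * α4 + An ^ 2 * α4) = 1 ↔
      β4 = 1) := by
  have hA1 : A1 ≠ 0 := fun s => h (by rw [s]; ring)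
  have hB : A1 + An ≠ 0 := fun s => h (by rw [s]; ring)
  have hD : A1 ^ 2 + A1 * An * β4 + A1 * An * α4 + An ^ 2 * α4 ≠ 0 :=
    fun s => h (by rw [s]; ring)
  refine ⟨by field_simp; ring, by rw [div_sub_one hD]; congr 1; ring, ?_, ?_⟩
  · rw [div_eq_div_iff hD hD]
    constructor
    · intro e
      have h2 : A1 * (A1 + An) * (A1 ^ 2 + A1 * An * β4 + A1 * An * α4 + An ^ 2 * α4) * (α4 - β4) = 0 := by
        linear_combination e
      have := (mul_eq_zero.mp h2).resolve_left h
      exact sub_eq_zero.mp this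
    · intro e; rw [e]; ring
  · rw [div_eq_one_iff_eq hD]
    constructor
    · intro e
      have h2 : A1 ^ 2 * (β4 - 1) = 0 := by linear_combination e
      have := (mul_eq_zero.mp h2).resolve_left (pow_ne_zero 2 hA1)
      exact sub_eq_zero.mp this
    · intro e; rw [e]; ring
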